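/- Let G be a group with a symmetric normal generating set S and associated word norm ‖·‖_S. If g ∈ G is undistorted with respect to ‖·‖_S, then there exists a function f : G → ℝ which is antisymmetric, homogeneous, a partial quasimorphism relative to ‖·‖_S (for some defect D ≥ 0), bounded on S, and satisfies f(g) > 0. -/

import Mathlib

open Filter Topology

/-- The word norm associated to a generating set `S`. -/
noncomputable def wordNorm {G : Type*} [Group G] (S : Set G) (g : G) : ℕ :=
  sInf {n : ℕ | ∃ l : List G, (∀ s ∈ l, s ∈ S) ∧ l.length = n ∧ l.prod = g}

namespace DetectQM

variable {G : Type*} [Group G] {S : Set G}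

lemma wn_le {x : G} {l : List G} (h1 : ∀ s ∈ l, s ∈ S) (h2 : l.prod = x) :
    wordNorm S x ≤ l.length :=
  Nat.sInf_le ⟨l, h1, rfl, h2⟩

lemma wn_exists (hgen : ∀ g : G, ∃ l : List G, (∀ s ∈ l, s ∈ S) ∧ l.prod = g) (x : G) :
    ∃ l : List G, (∀ s ∈ l, s ∈ S) ∧ l.length = wordNorm S x ∧ l.prod = x := by
  have hne : {n : ℕ | ∃ l : List G, (∀ s ∈ l, s ∈ S) ∧ l.length = n ∧ l.prod = x}.Nonempty := by
    obtain ⟨l, h1, h2⟩ := hgen x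
    exact ⟨l.length, l, h1, rfl, h2⟩
  exact Nat.sInf_mem hne

lemma wn_one : wordNorm S (1 : G) = 0 :=
  Nat.le_zero.mp (wn_le (l := []) (by simp) (by simp))

lemma wn_mem {s : G} (hs : s ∈ S) : wordNorm S s ≤ 1 :=
  wn_le (l := [s]) (by simpa using hs) (by simp)

variable (hgen : ∀ g : G, ∃ l : List G, (∀ s ∈ l, s ∈ S) ∧ l.prod = g)

include hgen

lemma wn_mul (x y : G) : wordNorm S (x * y) ≤ wordNorm S x + wordNorm S y := by
  obtain ⟨lx, hx1, hx2, hx3⟩ := wn_exists hgen x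
  obtain ⟨ly, hy1, hy2, hy3⟩ := wn_exists hgen y
  have := wn_le (S := S) (x := x * y) (l := lx ++ ly) ?_ ?_
  · simpa [hx2, hy2] using this
  · intro s hs
    rcases List.mem_append.1 hs with h | h
    · exact hx1 s h
    · exact hy1 s h
  · rw [List.prod_append, hx3, hy3]

lemma wn_inv (hsym : ∀ s ∈ S, s⁻¹ ∈ S) (x : G) : wordNorm S x⁻¹ = wordNorm S x := by
  have key : ∀ z : G, wordNorm S z⁻¹ ≤ wordNorm S z := by
    intro z
    obtain ⟨l, h1, h2, h3⟩ := wn_exists hgen z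
    have := wn_le (S := S) (x := z⁻¹) (l := (l.map fun a => a⁻¹).reverse) ?_ ?_
    · simpa [h2] using this
    · intro s hs
      simp only [List.mem_reverse, List.mem_map] at hs
      obtain ⟨a, ha, rfl⟩ := hs
      exact hsym a (h1 a ha)
    · rw [← h3, List.prod_inv_reverse]
  exact le_antisymm (key x) (by simpa using key x⁻¹)

omit hgen in
lemma conj_list_prod (z : G) : ∀ l : List G, (l.map fun s => z⁻¹ * s * z).prod = z⁻¹ * l.prod * z
  | [] => by simp
  | a :: l => by
    simp only [List.map_cons, List.prod_cons, conj_list_prod z l]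
    group

lemma wn_conj_le (hnormal : ∀ (g : G), ∀ s ∈ S, g⁻¹ * s * g ∈ S) (z x : G) :
    wordNorm S (z⁻¹ * x * z) ≤ wordNorm S x := by
  obtain ⟨l, h1, h2, h3⟩ := wn_exists hgen x
  have := wn_le (S := S) (x := z⁻¹ * x * z) (l := l.map fun s => z⁻¹ * s * z) ?_ ?_
  · simpa [h2] using this
  · intro s hs
    simp only [List.mem_map] at hs
    obtain ⟨a, ha, rfl⟩ := hs
    exact hnormal z a (h1 a ha)
  · rw [conj_list_prod, h3]

lemma wn_conj (hnormal : ∀ (g : G), ∀ s ∈ S, g⁻¹ * s * g ∈ S) (z x : G) :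
    wordNorm S (z⁻¹ * x * z) = wordNorm S x := by
  refine le_antisymm (wn_conj_le hgen hnormal z x) ?_
  have := wn_conj_le hgen hnormal z⁻¹ (z⁻¹ * x * z)
  have hx : z⁻¹⁻¹ * (z⁻¹ * x * z) * z⁻¹ = x := by group
  rwa [hx] at this

lemma wn_pow (x : G) (m : ℕ) : wordNorm S (x ^ m) ≤ m * wordNorm S x := by
  induction m with
  | zero => simp [wn_one]
  | succ m ih =>
    calc wordNorm S (x ^ (m + 1)) = wordNorm S (x ^ m * x) := by rw [pow_succ]
    _ ≤ wordNorm S (x ^ m) + wordNorm S x := wn_mul hgen _ _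
    _ ≤ m * wordNorm S x + wordNorm S x := by omega
    _ = (m + 1) * wordNorm S x := by ring

lemma wn_comm_pow1 (hnormal : ∀ (g : G), ∀ s ∈ S, g⁻¹ * s * g ∈ S) (x y : G) (m : ℕ) :
    wordNorm S ((x * y) ^ m * (y ^ m)⁻¹) ≤ m * wordNorm S x := by
  induction m with
  | zero => simp [wn_one]
  | succ m ih =>
    have hid : (x * y) ^ (m + 1) * (y ^ (m + 1))⁻¹
        = x * (y * ((x * y) ^ m * (y ^ m)⁻¹) * y⁻¹) := by
      rw [pow_succ' (x * y) m, pow_succ' y m]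
      group
    rw [hid]
    calc wordNorm S (x * (y * ((x * y) ^ m * (y ^ m)⁻¹) * y⁻¹))
        ≤ wordNorm S x + wordNorm S (y * ((x * y) ^ m * (y ^ m)⁻¹) * y⁻¹) :=
          wn_mul hgen _ _
      _ = wordNorm S x + wordNorm S ((x * y) ^ m * (y ^ m)⁻¹) := by
          rw [show y * ((x * y) ^ m * (y ^ m)⁻¹) * y⁻¹
              = (y⁻¹)⁻¹ * ((x * y) ^ m * (y ^ m)⁻¹) * y⁻¹ by group,
            wn_conj hgen hnormal]
      _ ≤ wordNorm S x + m * wordNorm S x := by omega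
      _ = (m + 1) * wordNorm S x := by ring

lemma wn_comm_pow2 (hnormal : ∀ (g : G), ∀ s ∈ S, g⁻¹ * s * g ∈ S) (x y : G) (m : ℕ) :
    wordNorm S ((x ^ m)⁻¹ * (x * y) ^ m) ≤ m * wordNorm S y := by
  induction m with
  | zero => simp [wn_one]
  | succ m ih =>
    have hid : (x ^ (m + 1))⁻¹ * (x * y) ^ (m + 1)
        = ((x ^ m)⁻¹ * y * x ^ m) * ((x ^ m)⁻¹ * (x * y) ^ m) := by
      rw [pow_succ' x m, pow_succ' (x * y) m, mul_inv_rev]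
      simp [mul_assoc, inv_mul_cancel_left, mul_inv_cancel_left]
    rw [hid]
    calc wordNorm S (((x ^ m)⁻¹ * y * x ^ m) * ((x ^ m)⁻¹ * (x * y) ^ m))
        ≤ wordNorm S ((x ^ m)⁻¹ * y * x ^ m) + wordNorm S ((x ^ m)⁻¹ * (x * y) ^ m) :=
          wn_mul hgen _ _
      _ = wordNorm S y + wordNorm S ((x ^ m)⁻¹ * (x * y) ^ m) := by
          rw [wn_conj hgen hnormal]
      _ ≤ wordNorm S y + m * wordNorm S y := by omega
      _ = (m + 1) * wordNorm S y := by ring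


end DetectQM

namespace DetectQM

/-! ### A shift-invariant "Banach limit" via Cesàro averages along an ultrafilter -/

noncomputable def cesaro (u : ℕ → ℝ) (N : ℕ) : ℝ :=
  (∑ n ∈ Finset.range (N + 1), u n) / (N + 1)

noncomputable def LIM (u : ℕ → ℝ) : ℝ :=
  limUnder (↑(Filter.hyperfilter ℕ) : Filter ℕ) (cesaro u)

lemma cesaro_abs_le {u : ℕ → ℝ} {B : ℝ} (h : ∀ n, |u n| ≤ B) (N : ℕ) :
    |cesaro u N| ≤ B := by
  have hpos : (0 : ℝ) < (N : ℝ) + 1 := by positivity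
  have hsum : |∑ n ∈ Finset.range (N + 1), u n| ≤ (N + 1) * B := by
    calc |∑ n ∈ Finset.range (N + 1), u n| ≤ ∑ n ∈ Finset.range (N + 1), |u n| :=
      Finset.abs_sum_le_sum_abs _ _
    _ ≤ ∑ _n ∈ Finset.range (N + 1), B := Finset.sum_le_sum fun n _ => h n
    _ = (N + 1) * B := by simp [Finset.sum_const, mul_comm]
  rw [cesaro, abs_div, abs_of_pos hpos, div_le_iff₀ hpos]
  calc |∑ n ∈ Finset.range (N + 1), u n| ≤ (N + 1) * B := hsum
  _ = B * ((N : ℝ) + 1) := by ring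

lemma exists_tendsto_ultra {u : ℕ → ℝ} {B : ℝ} (h : ∀ n, |u n| ≤ B) :
    ∃ x : ℝ, Tendsto u (↑(Filter.hyperfilter ℕ) : Filter ℕ) (𝓝 x) := by
  have hc : IsCompact (Set.Icc (-B) B) := isCompact_Icc
  have hle : ↑((Filter.hyperfilter ℕ).map u) ≤ 𝓟 (Set.Icc (-B) B) := by
    rw [Ultrafilter.coe_map, Filter.le_principal_iff, Filter.mem_map]
    refine Filter.Eventually.filter_mono le_rfl ?_
    exact Filter.Eventually.of_forall fun n => by
      have := abs_le.1 (h n); exact ⟨this.1, this.2⟩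
  obtain ⟨a, -, ha⟩ := hc.ultrafilter_le_nhds ((Filter.hyperfilter ℕ).map u) hle
  exact ⟨a, by rwa [Ultrafilter.coe_map] at ha⟩

lemma LIM_tendsto {u : ℕ → ℝ} {B : ℝ} (h : ∀ n, |u n| ≤ B) :
    Tendsto (cesaro u) (↑(Filter.hyperfilter ℕ) : Filter ℕ) (𝓝 (LIM u)) := by
  obtain ⟨x, hx⟩ := exists_tendsto_ultra (cesaro_abs_le h)
  rw [LIM, hx.limUnder_eq]
  exact hx

lemma LIM_abs_le {u : ℕ → ℝ} {B : ℝ} (h : ∀ n, |u n| ≤ B) : |LIM u| ≤ B := by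
  rw [abs_le]
  constructor
  · exact ge_of_tendsto (LIM_tendsto h)
      (Filter.Eventually.of_forall fun N => (abs_le.1 (cesaro_abs_le h N)).1)
  · exact le_of_tendsto (LIM_tendsto h)
      (Filter.Eventually.of_forall fun N => (abs_le.1 (cesaro_abs_le h N)).2)

lemma cesaro_add (u v : ℕ → ℝ) (N : ℕ) :
    cesaro (fun n => u n + v n) N = cesaro u N + cesaro v N := by
  simp [cesaro, Finset.sum_add_distrib, add_div]

lemma LIM_add {u v : ℕ → ℝ} {Bu Bv : ℝ} (hu : ∀ n, |u n| ≤ Bu) (hv : ∀ n, |v n| ≤ Bv) :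
    LIM (fun n => u n + v n) = LIM u + LIM v := by
  have hw : ∀ n, |u n + v n| ≤ Bu + Bv := fun n =>
    (abs_add_le _ _).trans (add_le_add (hu n) (hv n))
  have h1 : Tendsto (cesaro fun n => u n + v n) (↑(Filter.hyperfilter ℕ) : Filter ℕ)
      (𝓝 (LIM u + LIM v)) := by
    have := (LIM_tendsto hu).add (LIM_tendsto hv)
    simpa [← cesaro_add] using this
  exact tendsto_nhds_unique (LIM_tendsto hw) h1

lemma LIM_neg {u : ℕ → ℝ} {B : ℝ} (h : ∀ n, |u n| ≤ B) :
    LIM (fun n => -u n) = -LIM u := by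
  have hw : ∀ n, |-u n| ≤ B := fun n => by simpa using h n
  have h1 : Tendsto (cesaro fun n => -u n) (↑(Filter.hyperfilter ℕ) : Filter ℕ)
      (𝓝 (-LIM u)) := by
    have := (LIM_tendsto h).neg
    have heq : (fun N => -cesaro u N) = cesaro fun n => -u n := by
      funext N; simp [cesaro, Finset.sum_neg_distrib, neg_div]
    rwa [heq] at this
  exact tendsto_nhds_unique (LIM_tendsto hw) h1

lemma LIM_const (c : ℝ) : LIM (fun _ => c) = c := by
  have : (cesaro fun _ => c) = fun _ => c := by
    funext N
    have : ((N : ℝ) + 1) ≠ 0 := by positivity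
    rw [cesaro, Finset.sum_const, Finset.card_range, nsmul_eq_mul]
    push_cast
    rw [mul_comm]
    exact mul_div_cancel_right₀ c this
  rw [LIM, this]
  exact Tendsto.limUnder_eq tendsto_const_nhds

lemma LIM_le {u v : ℕ → ℝ} {Bu Bv : ℝ} (hu : ∀ n, |u n| ≤ Bu) (hv : ∀ n, |v n| ≤ Bv)
    (hle : ∀ n, u n ≤ v n) : LIM u ≤ LIM v := by
  refine le_of_tendsto_of_tendsto' (LIM_tendsto hu) (LIM_tendsto hv) fun N => ?_
  have hpos : (0 : ℝ) < (N : ℝ) + 1 := by positivity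
  rw [cesaro, cesaro]
  gcongr with n
  exact hle n

lemma LIM_shift {u : ℕ → ℝ} {B : ℝ} (h : ∀ n, |u n| ≤ B) :
    LIM (fun n => u (n + 1)) = LIM u := by
  have hw : ∀ n, |u (n + 1)| ≤ B := fun n => h (n + 1)
  have hdiff : cesaro (fun n => u (n + 1))
      = fun N => cesaro u N + (u (N + 1) - u 0) / (N + 1) := by
    funext N
    have h1 : ∑ n ∈ Finset.range (N + 2), u n
        = (∑ n ∈ Finset.range (N + 1), u (n + 1)) + u 0 := Finset.sum_range_succ' u (N + 1)
    have h2 : ∑ n ∈ Finset.range (N + 2), u n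
        = (∑ n ∈ Finset.range (N + 1), u n) + u (N + 1) := Finset.sum_range_succ u (N + 1)
    have hs : ∑ n ∈ Finset.range (N + 1), u (n + 1)
        = (∑ n ∈ Finset.range (N + 1), u n) + (u (N + 1) - u 0) := by linarith
    rw [cesaro, cesaro, hs, add_div]
  have hz : Tendsto (fun N : ℕ => (u (N + 1) - u 0) / (N + 1)) atTop (𝓝 0) := by
    apply squeeze_zero_norm (a := fun N : ℕ => (2 * B) / ((N : ℝ) + 1))
    · intro N
      have hpos : (0 : ℝ) < (N : ℝ) + 1 := by positivity
      rw [Real.norm_eq_abs, abs_div, abs_of_pos hpos]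
      gcongr
      calc |u (N + 1) - u 0| ≤ |u (N + 1)| + |u 0| := abs_sub _ _
      _ ≤ B + B := add_le_add (h _) (h _)
      _ = 2 * B := by ring
    · have := (tendsto_const_div_atTop_nhds_zero_nat (2 * B)).comp
        (tendsto_add_atTop_nat 1)
      refine this.congr fun N => ?_
      simp only [Function.comp_apply]
      push_cast
      ring_nf
  have h1 : Tendsto (cesaro fun n => u (n + 1)) (↑(Filter.hyperfilter ℕ) : Filter ℕ)
      (𝓝 (LIM u + 0)) := by
    rw [hdiff]
    exact (LIM_tendsto h).add (hz.mono_left Nat.hyperfilter_le_atTop)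
  have := tendsto_nhds_unique (LIM_tendsto hw) h1
  rw [this, add_zero]

lemma LIM_shift_add {u : ℕ → ℝ} {B : ℝ} (h : ∀ n, |u n| ≤ B) (m : ℕ) :
    LIM (fun n => u (n + m)) = LIM u := by
  induction m with
  | zero => simp
  | succ m ih =>
    have hw : ∀ n, |u (n + m)| ≤ B := fun n => h (n + m)
    have heq : (fun n => u (n + (m + 1))) = fun n => u (n + 1 + m) := by
      funext n; congr 1; omega
    rw [heq, LIM_shift (u := fun j => u (j + m)) hw, ih]


/-! ### The Banach-limit Busemann function along powers of `g` -/

variable {G : Type*} [Group G] {S : Set G}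

/-- distance-like sequence `n ↦ ‖x gⁿ‖ - ‖gⁿ‖`. -/
noncomputable def pseq (S : Set G) (g x : G) : ℕ → ℝ :=
  fun n => ((wordNorm S (x * g ^ n) : ℝ) - (wordNorm S (g ^ n) : ℝ))

/-- The Banach limit of the Cesàro averages of `pseq`. -/
noncomputable def pL (S : Set G) (g x : G) : ℝ := LIM (pseq S g x)

variable (hgen : ∀ g : G, ∃ l : List G, (∀ s ∈ l, s ∈ S) ∧ l.prod = g)
  (hsym : ∀ s ∈ S, s⁻¹ ∈ S)

include hgen

lemma pseq_diff_abs_le (hsym : ∀ s ∈ S, s⁻¹ ∈ S) (g a b : G) (n : ℕ) :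
    |pseq S g a n - pseq S g b n| ≤ (wordNorm S (a * b⁻¹) : ℝ) := by
  have h1 : wordNorm S (a * g ^ n) ≤ wordNorm S (a * b⁻¹) + wordNorm S (b * g ^ n) := by
    have := wn_mul hgen (a * b⁻¹) (b * g ^ n)
    rwa [show a * b⁻¹ * (b * g ^ n) = a * g ^ n by group] at this
  have h2 : wordNorm S (b * g ^ n) ≤ wordNorm S (a * b⁻¹) + wordNorm S (a * g ^ n) := by
    have := wn_mul hgen (b * a⁻¹) (a * g ^ n)
    rw [show b * a⁻¹ * (a * g ^ n) = b * g ^ n by group] at this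
    rwa [show b * a⁻¹ = (a * b⁻¹)⁻¹ by group, wn_inv hgen hsym] at this
  have h1' : (wordNorm S (a * g ^ n) : ℝ) ≤ (wordNorm S (a * b⁻¹) : ℝ) + (wordNorm S (b * g ^ n) : ℝ) := by exact_mod_cast h1
  have h2' : (wordNorm S (b * g ^ n) : ℝ) ≤ (wordNorm S (a * b⁻¹) : ℝ) + (wordNorm S (a * g ^ n) : ℝ) := by exact_mod_cast h2
  rw [abs_le]
  constructor
  · simp only [pseq]
    linarith
  · simp only [pseq]
    linarith

lemma pseq_abs_le (hsym : ∀ s ∈ S, s⁻¹ ∈ S) (g x : G) (n : ℕ) :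
    |pseq S g x n| ≤ (wordNorm S x : ℝ) := by
  have := pseq_diff_abs_le hgen hsym g x 1 n
  simpa [pseq] using this

lemma pL_dist (hsym : ∀ s ∈ S, s⁻¹ ∈ S) (g a b : G) :
    |pL S g a - pL S g b| ≤ (wordNorm S (a * b⁻¹) : ℝ) := by
  have hsub : pL S g a - pL S g b = LIM (fun n => pseq S g a n + -pseq S g b n) := by
    rw [LIM_add (pseq_abs_le hgen hsym g a) (fun n => by
      simpa using pseq_abs_le hgen hsym g b n : ∀ n, |(-pseq S g b n)| ≤ (wordNorm S b : ℝ)),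
      LIM_neg (pseq_abs_le hgen hsym g b)]
    rfl
  rw [hsub]
  exact LIM_abs_le fun n => by simpa [sub_eq_add_neg] using pseq_diff_abs_le hgen hsym g a b n

lemma pL_abs_le (hsym : ∀ s ∈ S, s⁻¹ ∈ S) (g x : G) :
    |pL S g x| ≤ (wordNorm S x : ℝ) :=
  LIM_abs_le (pseq_abs_le hgen hsym g x)

omit hgen in
lemma pL_one (g : G) : pL S g 1 = 0 := by
  have : pseq S g 1 = fun _ => (0 : ℝ) := by
    funext n; simp [pseq]
  rw [pL, this, LIM_const]

lemma pL_pow (hsym : ∀ s ∈ S, s⁻¹ ∈ S) (g : G) (m : ℕ) :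
    pL S g (g ^ m) = m * pL S g g := by
  induction m with
  | zero => simp [pL_one]
  | succ m ih =>
    have hkey : pseq S g (g ^ (m + 1)) = fun n =>
        (fun j => pseq S g (g ^ m) (j + 1)) n + pseq S g g n := by
      funext n
      have e1 : g ^ (m + 1) * g ^ n = g ^ m * g ^ (n + 1) := by
        rw [← pow_add, ← pow_add]; ring_nf
      have e2 : g * g ^ n = g ^ (n + 1) := (pow_succ' g n).symm
      simp only [pseq, e1, e2]
      ring
    have hb : ∀ n, |pseq S g (g ^ m) (n + 1)| ≤ (wordNorm S (g ^ m) : ℝ) :=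
      fun n => pseq_abs_le hgen hsym g (g ^ m) (n + 1)
    rw [pL, hkey, LIM_add hb (pseq_abs_le hgen hsym g g),
      LIM_shift (pseq_abs_le hgen hsym g (g ^ m)), ← pL, ← pL, ih]
    push_cast
    ring

lemma pL_pow_inv (hsym : ∀ s ∈ S, s⁻¹ ∈ S) (g : G) (m : ℕ) :
    pL S g ((g ^ m)⁻¹) = -(m * pL S g g) := by
  have hshift : (fun n => pseq S g ((g ^ m)⁻¹) (n + m)) = fun n => -pseq S g (g ^ m) n := by
    funext n
    have e1 : (g ^ m)⁻¹ * g ^ (n + m) = g ^ n := by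
      rw [pow_add]; group
    have e2 : g ^ m * g ^ n = g ^ (n + m) := by
      rw [add_comm, pow_add]
    simp only [pseq, e1, e2]
    ring
  have hb : ∀ n, |pseq S g ((g ^ m)⁻¹) n| ≤ (wordNorm S ((g ^ m)⁻¹) : ℝ) :=
    pseq_abs_le hgen hsym g ((g ^ m)⁻¹)
  have h1 : pL S g ((g ^ m)⁻¹) = LIM (fun n => pseq S g ((g ^ m)⁻¹) (n + m)) :=
    (LIM_shift_add hb m).symm
  rw [h1, hshift, LIM_neg (pseq_abs_le hgen hsym g (g ^ m)), ← pL,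
    pL_pow hgen hsym g m]


/-! ### limsup helpers for bounded real sequences -/

omit hgen

lemma bddU {u : ℕ → ℝ} {B : ℝ} (h : ∀ m, |u m| ≤ B) :
    Filter.IsBoundedUnder (· ≤ ·) atTop u :=
  Filter.isBoundedUnder_of ⟨B, fun m => (abs_le.1 (h m)).2⟩

lemma bddL {u : ℕ → ℝ} {B : ℝ} (h : ∀ m, |u m| ≤ B) :
    Filter.IsBoundedUnder (· ≥ ·) atTop u :=
  Filter.isBoundedUnder_of ⟨-B, fun m => (abs_le.1 (h m)).1⟩

lemma cobddU {u : ℕ → ℝ} {B : ℝ} (h : ∀ m, |u m| ≤ B) :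
    Filter.IsCoboundedUnder (· ≤ ·) atTop u :=
  (bddL h).isCoboundedUnder_le

lemma limsup_abs_le {u : ℕ → ℝ} {B : ℝ} (h : ∀ m, |u m| ≤ B) :
    |limsup u atTop| ≤ B := by
  rw [abs_le]
  constructor
  · exact le_limsup_of_frequently_le
      ((Filter.Eventually.of_forall fun m => (abs_le.1 (h m)).1).frequently) (bddU h)
  · exact limsup_le_of_le (cobddU h)
      (Filter.Eventually.of_forall fun m => (abs_le.1 (h m)).2)

lemma limsup_add_const' {u : ℕ → ℝ} {B : ℝ} (h : ∀ m, |u m| ≤ B) (c : ℝ) :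
    limsup (fun m => u m + c) atTop = limsup u atTop + c := by
  have hb : ∀ m, |u m + c| ≤ B + |c| := fun m =>
    (abs_add_le _ _).trans (add_le_add (h m) le_rfl)
  have := (OrderIso.addRight c).limsup_apply (u := u) (f := atTop)
    (bddU h) (cobddU h) ?_ ?_
  · simpa using this.symm
  · simpa using bddU hb
  · simpa using cobddU hb

lemma limsup_le_limsup_add_const {u v : ℕ → ℝ} {Bu Bv c : ℝ}
    (hu : ∀ m, |u m| ≤ Bu) (hv : ∀ m, |v m| ≤ Bv)
    (hc : ∀ m, u m ≤ v m + c) : limsup u atTop ≤ limsup v atTop + c := by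
  have hb : ∀ m, |v m + c| ≤ Bv + |c| := fun m =>
    (abs_add_le _ _).trans (add_le_add (hv m) le_rfl)
  calc limsup u atTop ≤ limsup (fun m => v m + c) atTop :=
        limsup_le_limsup (Filter.Eventually.of_forall hc) (cobddU hu) (bddU hb)
  _ = limsup v atTop + c := limsup_add_const' hv c

lemma limsup_comp_le {u : ℕ → ℝ} {B : ℝ} (h : ∀ m, |u m| ≤ B)
    {φ : ℕ → ℕ} (hφ : Tendsto φ atTop atTop) :
    limsup (fun m => u (φ m)) atTop ≤ limsup u atTop := by
  have h1 : limsup (fun m => u (φ m)) atTop = Filter.limsSup (Filter.map u (Filter.map φ atTop)) := by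
    rw [Filter.map_map]
    rfl
  have h2 : limsup u atTop = Filter.limsSup (Filter.map u atTop) := rfl
  rw [h1, h2]
  refine Filter.limsSup_le_limsSup_of_le (Filter.map_mono hφ) ?_ ?_
  · have : Filter.IsBoundedUnder (· ≥ ·) (Filter.map φ atTop) u :=
      ⟨-B, by
        rw [Filter.eventually_map]
        exact Filter.Eventually.of_forall fun m => (abs_le.1 (h m)).1⟩
    exact this.isCoboundedUnder_le
  · exact bddU h

lemma limsup_const_mul' {u : ℕ → ℝ} {B k : ℝ} (h : ∀ m, |u m| ≤ B) (hk : 0 < k) :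
    limsup (fun m => k * u m) atTop = k * limsup u atTop := by
  have hb : ∀ m, |k * u m| ≤ k * B := fun m => by
    rw [abs_mul, abs_of_pos hk]
    exact mul_le_mul_of_nonneg_left (h m) hk.le
  have := (OrderIso.mulLeft₀ k hk).limsup_apply (u := u) (f := atTop)
    (bddU h) (cobddU h) ?_ ?_
  · simpa using this.symm
  · simpa using bddU hb
  · simpa using cobddU hb

lemma le_of_forall_pos_le_add' {a b : ℝ} (h : ∀ ε : ℝ, 0 < ε → a ≤ b + ε) : a ≤ b := by
  by_contra hab
  push_neg at hab
  have := h ((a - b) / 2) (by linarith)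
  linarith


/-! ### The homogenization `f0` -/

/-- homogenized Busemann function. -/
noncomputable def f0 (S : Set G) (g x : G) : ℝ :=
  limsup (fun m : ℕ => pL S g (x ^ m) / m) atTop

include hgen

lemma f0_seq_abs_le (hsym : ∀ s ∈ S, s⁻¹ ∈ S) (g x : G) (m : ℕ) :
    |pL S g (x ^ m) / m| ≤ (wordNorm S x : ℝ) := by
  cases m with
  | zero => simp
  | succ m =>
    have hpos : (0 : ℝ) < ((m : ℝ) + 1) := by positivity
    have h1 : |pL S g (x ^ (m + 1))| ≤ (wordNorm S x : ℝ) * ((m : ℝ) + 1) := by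
      calc |pL S g (x ^ (m + 1))| ≤ (wordNorm S (x ^ (m + 1)) : ℝ) :=
            pL_abs_le hgen hsym g (x ^ (m + 1))
      _ ≤ ((m + 1) * wordNorm S x : ℕ) := by exact_mod_cast wn_pow hgen x (m + 1)
      _ = (wordNorm S x : ℝ) * ((m : ℝ) + 1) := by push_cast; ring
    have hc : ((m + 1 : ℕ) : ℝ) = (m : ℝ) + 1 := by push_cast; ring
    rw [abs_div, hc, abs_of_pos hpos, div_le_iff₀ hpos]
    exact h1

lemma f0_abs_le (hsym : ∀ s ∈ S, s⁻¹ ∈ S) (g x : G) :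
    |f0 S g x| ≤ (wordNorm S x : ℝ) :=
  limsup_abs_le (f0_seq_abs_le hgen hsym g x)

omit hgen in
lemma f0_one (g : G) : f0 S g 1 = 0 := by
  have : (fun m : ℕ => pL S g ((1 : G) ^ m) / m) = fun _ => (0 : ℝ) := by
    funext m; simp [pL_one]
  rw [f0, this, limsup_const]

lemma f0_g (hsym : ∀ s ∈ S, s⁻¹ ∈ S) (g : G) : f0 S g g = pL S g g := by
  have hev : ∀ᶠ m : ℕ in atTop, pL S g (g ^ m) / m = pL S g g := by
    filter_upwards [Filter.eventually_ge_atTop 1] with m hm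
    have hm' : ((m : ℝ)) ≠ 0 := by positivity
    rw [pL_pow hgen hsym g m]
    field_simp
  rw [f0, limsup_congr hev, limsup_const]

lemma f0_ginv (hsym : ∀ s ∈ S, s⁻¹ ∈ S) (g : G) : f0 S g g⁻¹ = -pL S g g := by
  have hev : ∀ᶠ m : ℕ in atTop, pL S g ((g⁻¹) ^ m) / m = -pL S g g := by
    filter_upwards [Filter.eventually_ge_atTop 1] with m hm
    have hm' : ((m : ℝ)) ≠ 0 := by positivity
    rw [inv_pow, pL_pow_inv hgen hsym g m]
    field_simp
  rw [f0, limsup_congr hev, limsup_const]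


lemma f0_mul_right (hsym : ∀ s ∈ S, s⁻¹ ∈ S) (hnormal : ∀ (g : G), ∀ s ∈ S, g⁻¹ * s * g ∈ S)
    (g x y : G) : |f0 S g (x * y) - f0 S g y| ≤ (wordNorm S x : ℝ) := by
  have key : ∀ m : ℕ, |pL S g ((x * y) ^ m) / m - pL S g (y ^ m) / m|
      ≤ (wordNorm S x : ℝ) := by
    intro m
    cases m with
    | zero => simp
    | succ m =>
      set j := m + 1
      have hpos : (0 : ℝ) < (j : ℝ) := by positivity
      have h1 : |pL S g ((x * y) ^ j) - pL S g (y ^ j)|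
          ≤ (wordNorm S ((x * y) ^ j * (y ^ j)⁻¹) : ℝ) := pL_dist hgen hsym g _ _
      have h2 : (wordNorm S ((x * y) ^ j * (y ^ j)⁻¹) : ℝ) ≤ (j : ℝ) * (wordNorm S x : ℝ) := by
        exact_mod_cast wn_comm_pow1 hgen hnormal x y j
      rw [div_sub_div_same, abs_div, abs_of_pos hpos, div_le_iff₀ hpos]
      calc |pL S g ((x * y) ^ j) - pL S g (y ^ j)| ≤ (j : ℝ) * (wordNorm S x : ℝ) :=
            h1.trans h2
      _ = (wordNorm S x : ℝ) * (j : ℝ) := by ring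
  have hu := f0_seq_abs_le hgen hsym g (x * y)
  have hv := f0_seq_abs_le hgen hsym g y
  rw [abs_sub_le_iff]
  constructor
  · have h := limsup_le_limsup_add_const hu hv
      (fun m => ((sub_le_iff_le_add.1 (abs_le.1 (key m)).2).trans_eq (add_comm _ _)))
    simp only [f0]
    exact sub_le_iff_le_add.2 (h.trans_eq (add_comm _ _))
  · have h := limsup_le_limsup_add_const hv hu
      (fun m => by
        have h := key m
        rw [abs_sub_comm] at h
        exact (sub_le_iff_le_add.1 (abs_le.1 h).2).trans_eq (add_comm _ _))
    simp only [f0]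
    exact sub_le_iff_le_add.2 (h.trans_eq (add_comm _ _))

lemma f0_mul_left (hsym : ∀ s ∈ S, s⁻¹ ∈ S) (hnormal : ∀ (g : G), ∀ s ∈ S, g⁻¹ * s * g ∈ S)
    (g x y : G) : |f0 S g (x * y) - f0 S g x| ≤ (wordNorm S y : ℝ) := by
  have key : ∀ m : ℕ, |pL S g ((x * y) ^ m) / m - pL S g (x ^ m) / m|
      ≤ (wordNorm S y : ℝ) := by
    intro m
    cases m with
    | zero => simp
    | succ m =>
      set j := m + 1
      have hpos : (0 : ℝ) < (j : ℝ) := by positivity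
      have h1 : |pL S g ((x * y) ^ j) - pL S g (x ^ j)|
          ≤ (wordNorm S ((x * y) ^ j * (x ^ j)⁻¹) : ℝ) := pL_dist hgen hsym g _ _
      have hconj : (x * y) ^ j * (x ^ j)⁻¹
          = ((x ^ j)⁻¹)⁻¹ * ((x ^ j)⁻¹ * (x * y) ^ j) * (x ^ j)⁻¹ := by group
      have h2 : (wordNorm S ((x * y) ^ j * (x ^ j)⁻¹) : ℝ) ≤ (j : ℝ) * (wordNorm S y : ℝ) := by
        rw [hconj, wn_conj hgen hnormal]
        exact_mod_cast wn_comm_pow2 hgen hnormal x y j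
      rw [div_sub_div_same, abs_div, abs_of_pos hpos, div_le_iff₀ hpos]
      calc |pL S g ((x * y) ^ j) - pL S g (x ^ j)| ≤ (j : ℝ) * (wordNorm S y : ℝ) :=
            h1.trans h2
      _ = (wordNorm S y : ℝ) * (j : ℝ) := by ring
  have hu := f0_seq_abs_le hgen hsym g (x * y)
  have hv := f0_seq_abs_le hgen hsym g x
  rw [abs_sub_le_iff]
  constructor
  · have h := limsup_le_limsup_add_const hu hv
      (fun m => ((sub_le_iff_le_add.1 (abs_le.1 (key m)).2).trans_eq (add_comm _ _)))
    simp only [f0]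
    exact sub_le_iff_le_add.2 (h.trans_eq (add_comm _ _))
  · have h := limsup_le_limsup_add_const hv hu
      (fun m => by
        have h := key m
        rw [abs_sub_comm] at h
        exact (sub_le_iff_le_add.1 (abs_le.1 h).2).trans_eq (add_comm _ _))
    simp only [f0]
    exact sub_le_iff_le_add.2 (h.trans_eq (add_comm _ _))

/-- The key floor-scaling estimate. -/
lemma bqm_est (hsym : ∀ s ∈ S, s⁻¹ ∈ S) (g x : G) {k m : ℕ} (hk : 0 < k) (hkm : k ≤ m) :
    pL S g (x ^ m) / m ≤ pL S g (x ^ (k * (m / k))) / ((k * (m / k) : ℕ) : ℝ)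
      + 2 * k * (wordNorm S x : ℝ) / m := by
  set M := k * (m / k) with hM
  set W := (wordNorm S x : ℝ) with hW
  have hW0 : 0 ≤ W := by positivity
  have hMm : M ≤ m := Nat.mul_div_le m k
  have hmMk : m < M + k := by
    have h1 := Nat.div_add_mod m k
    have h2 : m % k < k := Nat.mod_lt _ hk
    omega
  have hM1 : 1 ≤ M := by
    have : 1 ≤ m / k := (Nat.one_le_div_iff hk).2 hkm
    calc 1 ≤ k * 1 := by omega
    _ ≤ k * (m / k) := by exact Nat.mul_le_mul_left k this
  have hm1 : 1 ≤ m := hM1.trans hMm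
  have hmR : (0 : ℝ) < (m : ℝ) := by exact_mod_cast Nat.lt_of_lt_of_le Nat.zero_lt_one hm1
  have hMR : (0 : ℝ) < (M : ℝ) := by exact_mod_cast Nat.lt_of_lt_of_le Nat.zero_lt_one hM1
  set pm := pL S g (x ^ m) with hpm
  set pM := pL S g (x ^ M) with hpM
  -- distance estimate
  have hdist : |pm - pM| ≤ ((m - M : ℕ) : ℝ) * W := by
    have hxy : x ^ m * (x ^ M)⁻¹ = x ^ (m - M) := by
      rw [← pow_sub_mul_pow x hMm]
      group
    have h1 : |pm - pM| ≤ (wordNorm S (x ^ m * (x ^ M)⁻¹) : ℝ) := pL_dist hgen hsym g _ _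
    rw [hxy] at h1
    refine h1.trans ?_
    rw [hW]
    exact_mod_cast wn_pow hgen x (m - M)
  have hdist' : |pm - pM| ≤ (k : ℝ) * W := by
    refine hdist.trans ?_
    have : ((m - M : ℕ) : ℝ) ≤ (k : ℝ) := by
      have : m - M < k := by omega
      exact_mod_cast this.le
    exact mul_le_mul_of_nonneg_right this hW0
  have habs : |pM| ≤ (M : ℝ) * W := by
    have h1 : |pM| ≤ (wordNorm S (x ^ M) : ℝ) := pL_abs_le hgen hsym g _
    refine h1.trans ?_
    rw [hW]
    exact_mod_cast wn_pow hgen x M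
  -- real estimates
  have hd1 := abs_le.1 hdist'
  have hd2 := abs_le.1 habs
  have hmM : (M : ℝ) ≤ (m : ℝ) := by exact_mod_cast hMm
  have hmMk' : (m : ℝ) - (M : ℝ) ≤ (k : ℝ) := by
    have : (m : ℝ) < (M : ℝ) + (k : ℝ) := by exact_mod_cast hmMk
    linarith
  have hkR : (0 : ℝ) < (k : ℝ) := by exact_mod_cast hk
  have hmain : -pM * ((m : ℝ) - M) ≤ (M : ℝ) * (k * W) := by
    rcases le_or_gt (-pM) 0 with hneg | hposP
    · have h1 : -pM * ((m : ℝ) - M) ≤ 0 :=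
        mul_nonpos_of_nonpos_of_nonneg hneg (by linarith)
      have h2 : (0 : ℝ) ≤ (M : ℝ) * (k * W) := by positivity
      linarith
    · have h1 : -pM ≤ (M : ℝ) * W := by linarith [hd2.1]
      have h2 : (m : ℝ) - M ≤ (k : ℝ) := hmMk'
      have h3 := mul_le_mul h1 h2 (by linarith) (by positivity)
      nlinarith [h3]
  have hstep : pM ≤ pM * m / M + k * W := by
    have he : pM - pM * m / M = (-pM * ((m : ℝ) - M)) / M := by
      field_simp
      ring
    have hee : (-pM * ((m : ℝ) - M)) / M ≤ k * W :=
      (div_le_iff₀ hMR).2 (by nlinarith [hmain])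
    have h4 : pM - pM * (m : ℝ) / (M : ℝ) ≤ (k : ℝ) * W := by rw [he]; exact hee
    exact (sub_le_iff_le_add.1 h4).trans_eq (add_comm _ _)
  have hgoal : pm ≤ pM * m / M + 2 * (k * W) := by
    have h5 : pm ≤ pM + (k : ℝ) * W := (sub_le_iff_le_add.1 hd1.2).trans_eq (add_comm _ _)
    calc pm ≤ pM + (k : ℝ) * W := h5
    _ ≤ (pM * m / M + (k : ℝ) * W) + (k : ℝ) * W := add_le_add hstep le_rfl
    _ = pM * m / M + 2 * ((k : ℝ) * W) := by ring
  calc pm / m ≤ (pM * m / M + 2 * (k * W)) / m := by gcongr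
  _ = pM * m / M / m + 2 * (k * W) / m := add_div _ _ _
  _ = pM / M + 2 * k * W / m := by
      rw [div_div, mul_comm (M : ℝ) (m : ℝ), ← div_div, mul_div_cancel_right₀ _ (ne_of_gt hmR)]
      ring_nf


lemma f0_pow (hsym : ∀ s ∈ S, s⁻¹ ∈ S) (g x : G) (k : ℕ) :
    f0 S g (x ^ k) = k * f0 S g x := by
  rcases Nat.eq_zero_or_pos k with hk0 | hk
  · subst hk0
    simp [pow_zero, f0_one]
  · have hkR : (0 : ℝ) < (k : ℝ) := by exact_mod_cast hk
    set W := (wordNorm S x : ℝ) with hW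
    set b : ℕ → ℝ := fun j => pL S g (x ^ j) / j with hb
    have hbB : ∀ j, |b j| ≤ W := fun j => f0_seq_abs_le hgen hsym g x j
    have hstep1 : (fun m : ℕ => pL S g ((x ^ k) ^ m) / m) = fun m => (k : ℝ) * b (k * m) := by
      funext m
      cases m with
      | zero => simp [hb, pL_one]
      | succ m =>
        have hmne : ((m : ℝ) + 1) ≠ 0 := by positivity
        have hcast : ((k * (m + 1) : ℕ) : ℝ) = (k : ℝ) * ((m + 1 : ℕ) : ℝ) := by push_cast; ring
        simp only [hb]
        rw [← pow_mul, hcast]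
        have hkne : (k : ℝ) ≠ 0 := ne_of_gt hkR
        rw [mul_div_assoc']
        rw [mul_div_mul_left _ _ hkne]
    have ht1 : Tendsto (fun m : ℕ => k * m) atTop atTop :=
      Filter.tendsto_atTop_atTop.2 fun n =>
        ⟨n, fun m hm => le_trans hm (Nat.le_mul_of_pos_left m hk)⟩
    have ht2 : Tendsto (fun m : ℕ => m / k) atTop atTop :=
      Filter.tendsto_atTop_atTop.2 fun n =>
        ⟨n * k + k, fun m hm => (Nat.le_div_iff_mul_le hk).2 (by omega)⟩
    have hmain : limsup (fun m : ℕ => b (k * m)) atTop = limsup b atTop := by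
      apply le_antisymm
      · exact limsup_comp_le hbB ht1
      · apply le_of_forall_pos_le_add'
        intro ε hε
        have hW0 : 0 ≤ W := by rw [hW]; positivity
        obtain ⟨M0, hM0⟩ := exists_nat_gt (2 * k * W / ε)
        have hev : ∀ᶠ m : ℕ in atTop, b m ≤ (fun j => b (k * j)) (m / k) + ε := by
          filter_upwards [Filter.eventually_ge_atTop (max k (M0 + 1))] with m hm
          have hmk : k ≤ m := le_trans (le_max_left _ _) hm
          have hmM : M0 + 1 ≤ m := le_trans (le_max_right _ _) hm
          have hest := bqm_est hgen hsym g x hk hmk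
          have hmR : (0 : ℝ) < (m : ℝ) := by
            have : 0 < m := by omega
            exact_mod_cast this
          have h2 : 2 * (k : ℝ) * W / m ≤ ε := by
            rw [div_le_iff₀ hmR]
            have hM0m : (2 : ℝ) * k * W < ε * M0 := by
              rw [div_lt_iff₀ hε] at hM0
              linarith
            have : (M0 : ℝ) ≤ (m : ℝ) := by exact_mod_cast (by omega : M0 ≤ m)
            nlinarith
          have hbm : b m ≤ b (k * (m / k)) + 2 * (k : ℝ) * W / m := hest
          calc b m ≤ b (k * (m / k)) + 2 * (k : ℝ) * W / m := hbm
          _ ≤ b (k * (m / k)) + ε := by linarith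
        have hcomp : ∀ j, |(fun i => b (k * i)) j| ≤ W := fun j => hbB _
        have hbb : ∀ m, |(fun i => b (k * i)) (m / k) + ε| ≤ W + |ε| := fun m =>
          (abs_add_le _ _).trans (add_le_add (hbB _) le_rfl)
        calc limsup b atTop ≤ limsup (fun m => (fun j => b (k * j)) (m / k) + ε) atTop :=
              limsup_le_limsup hev (cobddU hbB) (bddU hbb)
        _ = limsup (fun m => (fun j => b (k * j)) (m / k)) atTop + ε :=
              limsup_add_const' (fun m => hbB _) ε
        _ ≤ limsup (fun j => b (k * j)) atTop + ε := by
              have := limsup_comp_le (u := fun j => b (k * j)) hcomp ht2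
              linarith
    rw [f0, hstep1, limsup_const_mul' (fun m => hbB (k * m)) hkR, hmain]
    rfl

end DetectQM

open DetectQM in
/-- If `g` is undistorted with respect to the word norm of a symmetric normal generating
set `S`, then there is an antisymmetric homogeneous partial quasimorphism relative to the
word norm which is bounded on `S` and positive on `g`. -/
theorem exists_detecting_partialQuasimorphism {G : Type*} [Group G] (S : Set G)
    (hgen : ∀ g : G, ∃ l : List G, (∀ s ∈ l, s ∈ S) ∧ l.prod = g)
    (hsym : ∀ s ∈ S, s⁻¹ ∈ S)
    (hnormal : ∀ (g : G), ∀ s ∈ S, g⁻¹ * s * g ∈ S)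
    (g : G)
    (hundist : ∃ C : ℝ, 0 < C ∧ ∀ n : ℕ, C * n ≤ (wordNorm S (g ^ n) : ℝ)) :
    ∃ f : G → ℝ,
      (∀ x : G, f x⁻¹ = -f x) ∧
      (∀ (x : G) (n : ℕ), f (x ^ n) = n * f x) ∧
      (∃ D : ℝ, 0 ≤ D ∧ ∀ x y : G, |f x - f (x * y) + f y| ≤
        D * min (wordNorm S x : ℝ) (wordNorm S y : ℝ)) ∧
      (∃ σ : ℝ, ∀ s ∈ S, |f s| ≤ σ) ∧
      0 < f g := by
  classical
  obtain ⟨C, hC, hCn⟩ := hundist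
  -- the translation number τ = pL S g g satisfies C ≤ τ
  have hτC : C ≤ pL S g g := by
    have hb := pseq_abs_le hgen hsym g g
    refine ge_of_tendsto (LIM_tendsto hb) (Filter.Eventually.of_forall fun N => ?_)
    have hsum : ∑ n ∈ Finset.range (N + 1), pseq S g g n
        = (wordNorm S (g ^ (N + 1)) : ℝ) - (wordNorm S (g ^ 0) : ℝ) := by
      refine Eq.trans ?_ (Finset.sum_range_sub (fun n => (wordNorm S (g ^ n) : ℝ)) (N + 1))
      refine Finset.sum_congr rfl fun n _ => ?_
      simp only [pseq, ← pow_succ']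
    have h0 : (wordNorm S (g ^ 0) : ℝ) = 0 := by
      simp [pow_zero, wn_one]
    have hpos : (0 : ℝ) < (N : ℝ) + 1 := by positivity
    rw [cesaro, hsum, h0, sub_zero, le_div_iff₀ hpos]
    have := hCn (N + 1)
    calc C * ((N : ℝ) + 1) = C * ((N + 1 : ℕ) : ℝ) := by push_cast; ring
    _ ≤ (wordNorm S (g ^ (N + 1)) : ℝ) := this
  have hτpos : 0 < pL S g g := lt_of_lt_of_le hC hτC
  refine ⟨fun x => (f0 S g x - f0 S g x⁻¹) / 2, ?_, ?_, ?_, ?_, ?_⟩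
  · -- antisymmetry
    intro x
    simp only [inv_inv]
    ring
  · -- homogeneity
    intro x n
    simp only
    rw [f0_pow hgen hsym g x n, ← inv_pow, f0_pow hgen hsym g x⁻¹ n]
    ring
  · -- partial quasimorphism
    refine ⟨2, by norm_num, fun x y => ?_⟩
    set A := f0 S g x - f0 S g (x * y) + f0 S g y with hA
    set B := f0 S g x⁻¹ - f0 S g ((x * y)⁻¹) + f0 S g y⁻¹ with hB
    have hWx : (0 : ℝ) ≤ (wordNorm S x : ℝ) := by positivity
    have hWy : (0 : ℝ) ≤ (wordNorm S y : ℝ) := by positivity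
    have hA1 : |A| ≤ 2 * (wordNorm S x : ℝ) := by
      have h1 := f0_abs_le hgen hsym g x
      have h2 := f0_mul_right hgen hsym hnormal g x y
      have he : A = f0 S g x - (f0 S g (x * y) - f0 S g y) := by rw [hA]; ring
      rw [he]
      exact (abs_sub _ _).trans (by linarith)
    have hA2 : |A| ≤ 2 * (wordNorm S y : ℝ) := by
      have h1 := f0_abs_le hgen hsym g y
      have h2 := f0_mul_left hgen hsym hnormal g x y
      have he : A = f0 S g y - (f0 S g (x * y) - f0 S g x) := by rw [hA]; ring
      rw [he]
      exact (abs_sub _ _).trans (by linarith)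
    have hinv : (x * y)⁻¹ = y⁻¹ * x⁻¹ := mul_inv_rev x y
    have hB1 : |B| ≤ 2 * (wordNorm S x : ℝ) := by
      have h1 := f0_abs_le hgen hsym g x⁻¹
      have h2 := f0_mul_left hgen hsym hnormal g y⁻¹ x⁻¹
      have hwx : (wordNorm S x⁻¹ : ℝ) = (wordNorm S x : ℝ) := by
        exact_mod_cast congrArg (fun n : ℕ => (n : ℝ)) (wn_inv hgen hsym x)
      have he : B = f0 S g x⁻¹ - (f0 S g (y⁻¹ * x⁻¹) - f0 S g y⁻¹) := by
        rw [hB, hinv]; ring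
      rw [he]
      refine (abs_sub _ _).trans ?_
      rw [hwx] at h1 h2
      linarith
    have hB2 : |B| ≤ 2 * (wordNorm S y : ℝ) := by
      have h1 := f0_abs_le hgen hsym g y⁻¹
      have h2 := f0_mul_right hgen hsym hnormal g y⁻¹ x⁻¹
      have hwy : (wordNorm S y⁻¹ : ℝ) = (wordNorm S y : ℝ) := by
        exact_mod_cast congrArg (fun n : ℕ => (n : ℝ)) (wn_inv hgen hsym y)
      have he : B = f0 S g y⁻¹ - (f0 S g (y⁻¹ * x⁻¹) - f0 S g x⁻¹) := by
        rw [hB, hinv]; ring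
      rw [he]
      refine (abs_sub _ _).trans ?_
      rw [hwy] at h1 h2
      linarith
    have htarget : (f0 S g x - f0 S g x⁻¹) / 2 - (f0 S g (x * y) - f0 S g ((x * y)⁻¹)) / 2
        + (f0 S g y - f0 S g y⁻¹) / 2 = (A - B) / 2 := by
      rw [hA, hB]; ring
    simp only
    rw [htarget]
    have habs : |(A - B) / 2| ≤ (|A| + |B|) / 2 := by
      rw [abs_div, abs_two]
      gcongr
      exact abs_sub _ _
    rcases le_total ((wordNorm S x : ℝ)) ((wordNorm S y : ℝ)) with h | h
    · rw [min_eq_left h]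
      calc |(A - B) / 2| ≤ (|A| + |B|) / 2 := habs
      _ ≤ 2 * (wordNorm S x : ℝ) := by linarith
    · rw [min_eq_right h]
      calc |(A - B) / 2| ≤ (|A| + |B|) / 2 := habs
      _ ≤ 2 * (wordNorm S y : ℝ) := by linarith
  · -- bounded on S
    refine ⟨1, fun s hs => ?_⟩
    have h1 := f0_abs_le hgen hsym g s
    have h2 := f0_abs_le hgen hsym g s⁻¹
    have hws : (wordNorm S s⁻¹ : ℝ) = (wordNorm S s : ℝ) := by
      exact_mod_cast congrArg (fun n : ℕ => (n : ℝ)) (wn_inv hgen hsym s)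
    have h4 : (wordNorm S s : ℝ) ≤ 1 := by exact_mod_cast wn_mem hs
    rw [hws] at h2
    simp only
    have h5 : |f0 S g s - f0 S g s⁻¹| ≤ 2 := by
      refine (abs_sub _ _).trans ?_
      linarith
    rw [abs_div, abs_two]
    linarith
  · -- positivity
    simp only
    rw [f0_g hgen hsym g, f0_ginv hgen hsym g]
    have : (pL S g g - -pL S g g) / 2 = pL S g g := by ring
    rw [this]
    exact hτpos
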